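/- Let l_1, l_2 be integers with l_2 ≤ l_1 ≤ 2·l_2. Then the number of pairs (x, y) of nonnegative integers such that x + 2y < l_1 or x + y < l_2 equals l_1²/2 + l_2² + l_1/2 − l_1·l_2. -/

import Mathlib

open Finset

private lemma sum_id_q (n : ℕ) : (∑ y ∈ Finset.range n, (y : ℚ)) = n * (n - 1) / 2 := by
  induction n with
  | zero => simp
  | succ m ih => rw [Finset.sum_range_succ, ih]; push_cast; ring

/-- For integers `l₂ ≤ l₁ ≤ 2l₂`, the number of pairs `(x,y)` of nonnegative
integers with `x + 2y < l₁` or `x + y < l₂` equals `l₁²/2 + l₂² + l₁/2 - l₁l₂`. -/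
theorem stmt11 (l₁ l₂ : ℤ) (h1 : l₂ ≤ l₁) (h2 : l₁ ≤ 2 * l₂) :
    (Set.ncard {p : ℕ × ℕ |
        (p.1 : ℤ) + 2 * (p.2 : ℤ) < l₁ ∨ (p.1 : ℤ) + (p.2 : ℤ) < l₂} : ℚ)
      = (l₁ : ℚ) ^ 2 / 2 + (l₂ : ℚ) ^ 2 + (l₁ : ℚ) / 2 - (l₁ : ℚ) * (l₂ : ℚ) := by
  have hl1 : 0 ≤ l₁ := by linarith
  have hl2 : 0 ≤ l₂ := by linarith
  lift l₁ to ℕ using hl1 with a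
  lift l₂ to ℕ using hl2 with b
  have hba : b ≤ a := by exact_mod_cast h1
  have hab : a ≤ 2 * b := by exact_mod_cast h2
  set G : Finset (ℕ × ℕ) := (range b).biUnion
    (fun y => (range (max (a - 2*y) (b - y))).map
      ⟨fun x => (x, y), fun u v h => by simpa using h⟩) with hG
  have hmem : ∀ x y : ℕ, (x, y) ∈ G ↔ (y < b ∧ x < max (a - 2*y) (b - y)) := by
    intro x y
    simp only [hG, Finset.mem_biUnion, Finset.mem_map, Finset.mem_range,
      Function.Embedding.coeFn_mk, Prod.mk.injEq]
    constructor
    · rintro ⟨y', hy', x', hx', rfl, rfl⟩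
      exact ⟨hy', hx'⟩
    · rintro ⟨hy, hx⟩
      exact ⟨y, hy, x, hx, rfl⟩
  have hset : {p : ℕ × ℕ |
      (p.1 : ℤ) + 2 * (p.2 : ℤ) < (a : ℤ) ∨ (p.1 : ℤ) + (p.2 : ℤ) < (b : ℤ)} = ↑G := by
    ext ⟨x, y⟩
    simp only [Set.mem_setOf_eq, Finset.coe_sort_coe, Finset.mem_coe, hmem]
    omega
  have hcard : G.card = ∑ y ∈ range b, max (a - 2*y) (b - y) := by
    rw [hG, Finset.card_biUnion]
    · simp
    · intro y₁ _ y₂ _ hne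
      refine Finset.disjoint_left.mpr ?_
      rintro ⟨u, v⟩ h₁ h₂
      simp only [Finset.mem_map, Function.Embedding.coeFn_mk, Prod.mk.injEq] at h₁ h₂
      obtain ⟨_, _, _, rfl⟩ := h₁
      obtain ⟨_, _, _, h⟩ := h₂
      simp_all
  rw [hset, Set.ncard_coe_finset, hcard]
  rw [Nat.cast_sum]
  have hsplit : (∑ y ∈ range b, (↑(max (a - 2*y) (b - y)) : ℚ))
      = (∑ y ∈ range (a - b), ((a : ℚ) - 2*y)) + ∑ y ∈ Ico (a - b) b, ((b : ℚ) - y) := by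
    rw [range_eq_Ico, ← Finset.sum_Ico_consecutive _ (Nat.zero_le (a - b)) (by omega),
      ← range_eq_Ico]
    congr 1
    · refine Finset.sum_congr rfl fun y hy => ?_
      rw [Finset.mem_range] at hy
      have h1' : max (a - 2*y) (b - y) = a - 2*y := by omega
      rw [h1', Nat.cast_sub (by omega)]
      push_cast
      try ring
    · refine Finset.sum_congr rfl fun y hy => ?_
      rw [Finset.mem_Ico] at hy
      have h1' : max (a - 2*y) (b - y) = b - y := by omega
      rw [h1', Nat.cast_sub (by omega)]
      try push_cast
      try ring
  rw [hsplit]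
  have key : ∀ (c : ℚ) (n : ℕ), (∑ y ∈ range n, (c - y)) = n * c - n * (n - 1) / 2 := by
    intro c n
    rw [Finset.sum_sub_distrib, Finset.sum_const, sum_id_q, card_range, nsmul_eq_mul]
    try ring
  have key2 : ∀ (c : ℚ) (n : ℕ), (∑ y ∈ range n, (c - 2*y)) = n * c - n * (n - 1) := by
    intro c n
    rw [Finset.sum_sub_distrib, ← Finset.mul_sum, Finset.sum_const, sum_id_q, card_range,
      nsmul_eq_mul]
    ring
  have hIco : (∑ y ∈ Ico (a - b) b, ((b : ℚ) - y))
      = (∑ y ∈ range b, ((b : ℚ) - y)) - ∑ y ∈ range (a - b), ((b : ℚ) - y) := by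
    rw [range_eq_Ico,
      ← Finset.sum_Ico_consecutive _ (Nat.zero_le (a - b)) (by omega : a - b ≤ b)]
    simp only [range_eq_Ico]
    ring
  rw [hIco, key, key, key2]
  have hk : ((a - b : ℕ) : ℚ) = (a : ℚ) - b := by
    rw [Nat.cast_sub hba]
  rw [hk]
  push_cast
  ring
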